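/- arXiv:2204.05923 — 6 statements merged into one kernel-verified Lean document; each statement's English description precedes it below -/
import Mathlib

section
/- Let (X_n) be a Markov chain, A_n = {X_n ∈ Ω_n}, B_n = {X_n ∈ Ω}, and suppose the chain's Markov property yields ℙ(B_{n+1}|A_n^c ∩ E) = ℙ(B_{n+1}|A_n^c) for events E in the σ-algebra of X_{n−1}, and ℙ(A_n^c | X_{n−1} ∈ Ω_{n−1}^c ∩ Ω^c) = ℙ(A_n^c | X_{n−1} ∈ Ω_{n−1}^c). Then ℙ(B_{n+1} | B_{n−1}^c) ≥ l_{n+1}, where l_{n+1} = ℙ(B_{n+1}|A_n^c) · min( min_{x∈Ω_{n−1}} ℙ(A_n^c | X_{n−1}=x), ℙ(A_n^c | A_{n−1}^c) ). -/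
open MeasureTheory ProbabilityTheory ENNReal

theorem stmt6 {E : Type*} [mE : MeasurableSpace E] {Ωs : Type*} [MeasurableSpace Ωs]
    (μ : Measure Ωs) [IsProbabilityMeasure μ]
    (X : ℕ → Ωs → E) (hX : ∀ n, Measurable (X n))
    (n : ℕ) (hn : 1 ≤ n)
    (Ω : Set E) (hΩ : MeasurableSet Ω)
    (Ωn : ℕ → Set E) (hΩn : ∀ k, MeasurableSet (Ωn k))
    (κ : E → Measure E)
    -- κ is the transition law of X_n given X_{n-1}
    (hκ : ∀ S : Set E, MeasurableSet S → ∀ T : Set E, MeasurableSet T →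
      μ (X (n - 1) ⁻¹' T ∩ X n ⁻¹' S) = ∫⁻ x in T, κ x S ∂(μ.map (X (n - 1))))
    -- Markov property: conditioning further on X_{n-1}-measurable events does not change
    -- the conditional probability of B_{n+1} given A_nᶜ
    (hMarkov : ∀ S : Set Ωs,
      MeasurableSet[MeasurableSpace.comap (X (n - 1)) mE] S →
      ProbabilityTheory.cond μ ((X n ⁻¹' Ωn n)ᶜ ∩ S) (X (n + 1) ⁻¹' Ω) =
      ProbabilityTheory.cond μ ((X n ⁻¹' Ωn n)ᶜ) (X (n + 1) ⁻¹' Ω))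
    -- uniform-restart property: conditional probability of A_nᶜ given X_{n-1} ∈ Ω_{n-1}ᶜ ∩ Ωᶜ
    -- equals that given X_{n-1} ∈ Ω_{n-1}ᶜ
    (hUnif : ProbabilityTheory.cond μ (X (n - 1) ⁻¹' ((Ωn (n - 1))ᶜ ∩ Ωᶜ)) ((X n ⁻¹' Ωn n)ᶜ) =
      ProbabilityTheory.cond μ (X (n - 1) ⁻¹' (Ωn (n - 1))ᶜ) ((X n ⁻¹' Ωn n)ᶜ))
    (l : ℝ≥0∞)
    (hl : l = ProbabilityTheory.cond μ ((X n ⁻¹' Ωn n)ᶜ) (X (n + 1) ⁻¹' Ω) *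
      min (⨅ x ∈ Ωn (n - 1), κ x ((Ωn n)ᶜ))
        (ProbabilityTheory.cond μ ((X (n - 1) ⁻¹' Ωn (n - 1))ᶜ) ((X n ⁻¹' Ωn n)ᶜ))) :
    l ≤ ProbabilityTheory.cond μ ((X (n - 1) ⁻¹' Ω)ᶜ) (X (n + 1) ⁻¹' Ω) := by
  classical
  set A : Set Ωs := (X n ⁻¹' Ωn n)ᶜ with hA
  set B : Set Ωs := X (n + 1) ⁻¹' Ω with hB
  set C : Set Ωs := (X (n - 1) ⁻¹' Ω)ᶜ with hC
  set T : Set Ωs := X (n - 1) ⁻¹' Ωn (n - 1) with hT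
  have mA : MeasurableSet A := ((hΩn n).preimage (hX n)).compl
  have mB : MeasurableSet B := hΩ.preimage (hX (n + 1))
  have mC : MeasurableSet C := (hΩ.preimage (hX (n - 1))).compl
  have mT : MeasurableSet T := (hΩn (n - 1)).preimage (hX (n - 1))
  set p : ℝ≥0∞ := μ[B|A] with hp
  set m : ℝ≥0∞ := min (⨅ x ∈ Ωn (n - 1), κ x ((Ωn n)ᶜ)) (μ[A|Tᶜ]) with hm
  -- rewrite hUnif
  have hCT : C ∩ Tᶜ = X (n - 1) ⁻¹' ((Ωn (n - 1))ᶜ ∩ Ωᶜ) := by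
    rw [Set.preimage_inter, Set.preimage_compl, Set.preimage_compl]
    exact Set.inter_comm _ _
  have hTc : Tᶜ = X (n - 1) ⁻¹' ((Ωn (n - 1))ᶜ) := by
    rw [Set.preimage_compl]
  have hUnif' : μ[A|C ∩ Tᶜ] = μ[A|Tᶜ] := by
    rw [hCT, hTc]; exact hUnif
  -- degenerate case
  by_cases hC0 : μ C = 0
  · have h1 : μ (C ∩ Tᶜ ∩ A) = 0 :=
      measure_mono_null (Set.inter_subset_left.trans Set.inter_subset_left) hC0
    have h2 : μ[A|Tᶜ] = 0 := by
      rw [← hUnif', cond_apply (mC.inter mT.compl), h1, mul_zero]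
    have : l = 0 := by
      rw [hl, hm, h2, min_eq_right zero_le, mul_zero]
    simp [this]
  -- main case
  have hCfin : μ C ≠ ⊤ := measure_ne_top μ C
  -- Step: m * μ (C ∩ T) ≤ μ (C ∩ T ∩ A)
  have step1 : m * μ (C ∩ T) ≤ μ (C ∩ T ∩ A) := by
    have hpre : C ∩ T = X (n - 1) ⁻¹' (Ωᶜ ∩ Ωn (n - 1)) := by
      rw [Set.preimage_inter, Set.preimage_compl]
    have hkey : μ (C ∩ T ∩ A) =
        ∫⁻ x in Ωᶜ ∩ Ωn (n - 1), κ x ((Ωn n)ᶜ) ∂(μ.map (X (n - 1))) := by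
      rw [hpre, hA, ← Set.preimage_compl]
      exact hκ ((Ωn n)ᶜ) (hΩn n).compl _ (hΩ.compl.inter (hΩn (n - 1)))
    have hmap : (μ.map (X (n - 1))) (Ωᶜ ∩ Ωn (n - 1)) = μ (C ∩ T) := by
      rw [Measure.map_apply (hX (n - 1)) (hΩ.compl.inter (hΩn (n - 1))), hpre]
    calc m * μ (C ∩ T) ≤ (⨅ x ∈ Ωn (n - 1), κ x ((Ωn n)ᶜ)) * μ (C ∩ T) :=
          mul_le_mul_left (min_le_left _ _) _
      _ = ∫⁻ _ in Ωᶜ ∩ Ωn (n - 1), (⨅ x ∈ Ωn (n - 1), κ x ((Ωn n)ᶜ)) ∂(μ.map (X (n - 1))) := by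
          rw [setLIntegral_const, hmap]
      _ ≤ ∫⁻ x in Ωᶜ ∩ Ωn (n - 1), κ x ((Ωn n)ᶜ) ∂(μ.map (X (n - 1))) := by
          refine lintegral_mono_ae ?_
          refine ae_restrict_of_forall_mem (hΩ.compl.inter (hΩn (n - 1))) ?_
          intro x hx
          exact biInf_le _ hx.2
      _ = μ (C ∩ T ∩ A) := hkey.symm
  -- Step: m * μ (C ∩ Tᶜ) ≤ μ (C ∩ Tᶜ ∩ A)
  have step2 : m * μ (C ∩ Tᶜ) ≤ μ (C ∩ Tᶜ ∩ A) := by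
    calc m * μ (C ∩ Tᶜ) ≤ μ[A|C ∩ Tᶜ] * μ (C ∩ Tᶜ) := by
          refine mul_le_mul_left ?_ _
          rw [hUnif']; exact min_le_right _ _
      _ = μ (C ∩ Tᶜ ∩ A) := cond_mul_eq_inter (mC.inter mT.compl) A μ
  -- combine: m * μ C ≤ μ (C ∩ A)
  have hsplit : μ C = μ (C ∩ T) + μ (C ∩ Tᶜ) := by
    rw [← measure_inter_add_diff C mT, Set.diff_eq]
  have hsplit2 : μ (C ∩ A) = μ (C ∩ T ∩ A) + μ (C ∩ Tᶜ ∩ A) := by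
    rw [← measure_inter_add_diff (C ∩ A) mT, Set.diff_eq]
    congr 1
    · rw [Set.inter_right_comm]
    · rw [Set.inter_right_comm]
  have step3 : m * μ C ≤ μ (C ∩ A) := by
    rw [hsplit, mul_add, hsplit2]
    exact add_le_add step1 step2
  -- Markov step: p * μ (A ∩ C) = μ (A ∩ C ∩ B)
  have hMk : μ[B|A ∩ C] = p := hMarkov C ⟨Ωᶜ, hΩ.compl, by rw [hC, Set.preimage_compl]⟩
  have step4 : p * μ (A ∩ C) = μ (A ∩ C ∩ B) := by
    rw [← hMk]
    exact cond_mul_eq_inter (mA.inter mC) B μ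
  -- final chain
  have final : l * μ C ≤ μ (C ∩ B) := by
    calc l * μ C = p * (m * μ C) := by rw [hl, mul_assoc]
      _ ≤ p * μ (C ∩ A) := mul_le_mul_right step3 _
      _ = p * μ (A ∩ C) := by rw [Set.inter_comm]
      _ = μ (A ∩ C ∩ B) := step4
      _ ≤ μ (C ∩ B) := measure_mono (fun x hx => ⟨hx.1.2, hx.2⟩)
  rw [cond_apply mC, ← ENNReal.div_eq_inv_mul]
  exact (ENNReal.le_div_iff_mul_le (Or.inl hC0) (Or.inl hCfin)).2 final
end

section
/- Consider the recurrence r_{n+1} = g(n) r_n + h(n) for n ≥ n₀ with g(n) = 1 − κ n^{−α} − β₂ n^{−α₂} and h(n) = β₂ n^{−α₂}, where κ, β₂ > 0, 0 < α < α₂ < 1, r_{n₀} ∈ [0,1], and g(n₀) > 0. Then r_n = O(n^{α−α₂}) as n → ∞; in particular r_n → 0. -/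
open Filter Asymptotics

private lemma rpow_step {x δ : ℝ} (hx : 1 ≤ x) (hδ0 : 0 < δ) (hδ1 : δ < 1) :
    x ^ (-δ) - δ * x ^ (-δ - 1) ≤ (x + 1) ^ (-δ) := by
  have hx0 : (0:ℝ) < x := lt_of_lt_of_le one_pos hx
  have hx1 : (0:ℝ) < x + 1 := by linarith
  have hBpos : (0:ℝ) < (x + 1) ^ δ := Real.rpow_pos_of_pos hx1 _
  have hinv : x⁻¹ ≤ 1 := by
    rw [inv_le_one_iff₀]; right; exact hx
  have hinv0 : (0:ℝ) ≤ x⁻¹ := inv_nonneg.2 hx0.le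
  have htle : δ * x⁻¹ ≤ 1 := by nlinarith
  -- Bernoulli: (1 + 1/x)^δ ≤ 1 + δ/x
  have hbern : (1 + x⁻¹) ^ δ ≤ 1 + δ * x⁻¹ :=
    rpow_one_add_le_one_add_mul_self (by linarith) hδ0.le hδ1.le
  have hB : (x + 1) ^ δ ≤ x ^ δ * (1 + δ * x⁻¹) := by
    have : (x + 1) ^ δ = x ^ δ * (1 + x⁻¹) ^ δ := by
      rw [← Real.mul_rpow hx0.le (by positivity), mul_add, mul_inv_cancel₀ hx0.ne', mul_one]
    rw [this]
    exact mul_le_mul_of_nonneg_left hbern (Real.rpow_nonneg hx0.le _)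
  have hA : x ^ (-δ) - δ * x ^ (-δ - 1) = x ^ (-δ) * (1 - δ * x⁻¹) := by
    have : x ^ (-δ - 1) = x ^ (-δ) * x⁻¹ := by
      rw [show -δ - 1 = -δ + (-1) by ring, Real.rpow_add hx0, Real.rpow_neg_one]
    rw [this]; ring
  have hApos : 0 ≤ x ^ (-δ) * (1 - δ * x⁻¹) := by
    apply mul_nonneg (Real.rpow_nonneg hx0.le _); linarith
  have hmul : (x ^ (-δ) - δ * x ^ (-δ - 1)) * ((x + 1) ^ δ) ≤ 1 := by
    rw [hA]
    calc x ^ (-δ) * (1 - δ * x⁻¹) * (x + 1) ^ δ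
        ≤ x ^ (-δ) * (1 - δ * x⁻¹) * (x ^ δ * (1 + δ * x⁻¹)) :=
          mul_le_mul_of_nonneg_left hB hApos
      _ = (x ^ (-δ) * x ^ δ) * ((1 - δ * x⁻¹) * (1 + δ * x⁻¹)) := by ring
      _ = 1 * ((1 - δ * x⁻¹) * (1 + δ * x⁻¹)) := by
          rw [← Real.rpow_add hx0, neg_add_cancel, Real.rpow_zero]
      _ ≤ 1 := by nlinarith [sq_nonneg (δ * x⁻¹)]
  have hC : (x + 1) ^ (-δ) * (x + 1) ^ δ = 1 := by
    rw [← Real.rpow_add hx1, neg_add_cancel, Real.rpow_zero]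
  exact le_of_mul_le_mul_right (by rw [hC]; exact hmul) hBpos

set_option maxHeartbeats 1000000 in
theorem stmt9 (κ β₂ α α₂ : ℝ) (hκ : 0 < κ) (hβ₂ : 0 < β₂)
    (hα : 0 < α) (hαα₂ : α < α₂) (hα₂ : α₂ < 1)
    (n₀ : ℕ) (r g h : ℕ → ℝ)
    (hg : ∀ n, g n = 1 - κ * (n : ℝ) ^ (-α) - β₂ * (n : ℝ) ^ (-α₂))
    (hh : ∀ n, h n = β₂ * (n : ℝ) ^ (-α₂))
    (hrec : ∀ n, n₀ ≤ n → r (n + 1) = g n * r n + h n)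
    (hr0 : r n₀ ∈ Set.Icc (0 : ℝ) 1)
    (hgn₀ : 0 < g n₀) :
    (fun n => r n) =O[atTop] (fun n : ℕ => (n : ℝ) ^ (α - α₂)) ∧
    Tendsto r atTop (nhds 0) := by
  set δ := α₂ - α with hδdef
  have hδ0 : 0 < δ := by simp [hδdef]; linarith
  have hδ1 : δ < 1 := by simp [hδdef]; linarith
  clear_value δ
  have hcast : Tendsto (fun n : ℕ => (n : ℝ)) atTop atTop := tendsto_natCast_atTop_atTop
  -- eventual bounds
  have ev1 : ∀ᶠ n : ℕ in atTop, κ * (n:ℝ) ^ (-α) + β₂ * (n:ℝ) ^ (-α₂) < 1 := by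
    have t1 : Tendsto (fun n : ℕ => κ * (n:ℝ) ^ (-α) + β₂ * (n:ℝ) ^ (-α₂)) atTop (nhds 0) := by
      have := ((tendsto_rpow_neg_atTop hα).comp hcast).const_mul κ
      have h2 := ((tendsto_rpow_neg_atTop (by linarith : (0:ℝ) < α₂)).comp hcast).const_mul β₂
      simpa using this.add h2
    exact t1.eventually_lt_const one_pos
  have ev2 : ∀ᶠ n : ℕ in atTop, δ * (n:ℝ) ^ (α - 1) < κ / 2 := by
    have t1 : Tendsto (fun n : ℕ => δ * (n:ℝ) ^ (α - 1)) atTop (nhds 0) := by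
      have := ((tendsto_rpow_neg_atTop (by linarith : (0:ℝ) < 1 - α)).comp hcast).const_mul δ
      simpa [neg_sub] using this
    exact t1.eventually_lt_const (by positivity)
  obtain ⟨N, hN⟩ := (((ev1.and ev2).and (eventually_ge_atTop n₀)).and
      (eventually_ge_atTop 1)).exists_forall_of_atTop
  have hN1 : 1 ≤ N := (hN N le_rfl).2
  have hNcast : (1:ℝ) ≤ (N:ℝ) := by exact_mod_cast hN1
  set C : ℝ := 2 * β₂ / κ + |r N| * (N:ℝ) ^ δ with hCdef
  have hCpos : 0 < C := by
    have : (0:ℝ) ≤ |r N| * (N:ℝ) ^ δ :=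
      mul_nonneg (abs_nonneg _) (Real.rpow_nonneg (by linarith) _)
    have : (0:ℝ) < 2 * β₂ / κ := by positivity
    simp only [hCdef]; linarith [mul_nonneg (abs_nonneg (r N)) (Real.rpow_nonneg (show (0:ℝ) ≤ N by linarith) δ)]
  clear_value C
  have key : ∀ n, N ≤ n → |r n| ≤ C * (n:ℝ) ^ (-δ) := by
    intro n hn
    induction n, hn using Nat.le_induction with
    | base =>
      have hNe : (N:ℝ) ^ δ * (N:ℝ) ^ (-δ) = 1 := by
        rw [← Real.rpow_add (by linarith), add_neg_cancel, Real.rpow_zero]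
      have : C * (N:ℝ) ^ (-δ) = 2 * β₂ / κ * (N:ℝ) ^ (-δ) + |r N| := by
        rw [hCdef]; rw [add_mul, mul_assoc, hNe, mul_one]
      rw [this]
      have : 0 ≤ 2 * β₂ / κ * (N:ℝ) ^ (-δ) := by positivity
      linarith
    | succ n hn ih =>
      have hnN : (1:ℝ) ≤ (n:ℝ) := by
        have := (hN n hn).2; exact_mod_cast this
      have hn0 : (0:ℝ) < (n:ℝ) := by linarith
      have hcond := hN n hn
      have hg0 : 0 ≤ g n := by
        rw [hg n]; linarith [hcond.1.1.1]
      have hh0 : 0 ≤ h n := by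
        rw [hh n]; positivity
      have hrn := hrec n (le_trans hcond.1.2 le_rfl)
      -- |r (n+1)| ≤ g n * |r n| + h n
      have h1 : |r (n+1)| ≤ g n * |r n| + h n := by
        rw [hrn]
        calc |g n * r n + h n| ≤ |g n * r n| + |h n| := abs_add_le _ _
          _ = g n * |r n| + h n := by rw [abs_mul, abs_of_nonneg hg0, abs_of_nonneg hh0]
      have h2 : g n * |r n| ≤ g n * (C * (n:ℝ) ^ (-δ)) := mul_le_mul_of_nonneg_left ih hg0
      -- expand
      have hαδ : (n:ℝ) ^ (-α) * (n:ℝ) ^ (-δ) = (n:ℝ) ^ (-α₂) := by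
        rw [← Real.rpow_add hn0]; congr 1; simp [hδdef]; ring
      have h3 : g n * (C * (n:ℝ) ^ (-δ)) + h n ≤ C * (n:ℝ) ^ (-δ) - (C * κ - β₂) * (n:ℝ) ^ (-α₂) := by
        rw [hg n, hh n]
        have hnn : 0 ≤ β₂ * C * ((n:ℝ) ^ (-α₂) * (n:ℝ) ^ (-δ)) := by positivity
        calc (1 - κ * (n:ℝ) ^ (-α) - β₂ * (n:ℝ) ^ (-α₂)) * (C * (n:ℝ) ^ (-δ)) + β₂ * (n:ℝ) ^ (-α₂)
            = C * (n:ℝ) ^ (-δ) - C * κ * ((n:ℝ) ^ (-α) * (n:ℝ) ^ (-δ))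
              - β₂ * C * ((n:ℝ) ^ (-α₂) * (n:ℝ) ^ (-δ)) + β₂ * (n:ℝ) ^ (-α₂) := by ring
          _ = C * (n:ℝ) ^ (-δ) - C * κ * (n:ℝ) ^ (-α₂)
              - β₂ * C * ((n:ℝ) ^ (-α₂) * (n:ℝ) ^ (-δ)) + β₂ * (n:ℝ) ^ (-α₂) := by rw [hαδ]
          _ ≤ C * (n:ℝ) ^ (-δ) - (C * κ - β₂) * (n:ℝ) ^ (-α₂) := by linarith
      -- step inequality
      have h4 : C * (n:ℝ) ^ (-δ) - C * δ * (n:ℝ) ^ (-δ - 1) ≤ C * ((n:ℝ) + 1) ^ (-δ) := by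
        have h4a := mul_le_mul_of_nonneg_left (rpow_step hnN hδ0 hδ1) hCpos.le
        have h4b : C * ((n:ℝ) ^ (-δ) - δ * (n:ℝ) ^ (-δ - 1))
            = C * (n:ℝ) ^ (-δ) - C * δ * (n:ℝ) ^ (-δ - 1) := by ring
        linarith [h4b ▸ h4a]
      have h5 : C * δ * (n:ℝ) ^ (-δ - 1) ≤ (C * κ - β₂) * (n:ℝ) ^ (-α₂) := by
        have hsplit : (n:ℝ) ^ (-δ - 1) = (n:ℝ) ^ (-α₂) * (n:ℝ) ^ (α - 1) := by
          rw [← Real.rpow_add hn0]; congr 1; simp [hδdef]; ring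
        rw [hsplit]
        have hd : δ * (n:ℝ) ^ (α - 1) ≤ κ / 2 := (hcond.1.1.2).le
        have hCκ : C * (κ / 2) ≤ C * κ - β₂ := by
          have : 2 * β₂ / κ ≤ C := by
            simp only [hCdef]
            linarith [mul_nonneg (abs_nonneg (r N)) (Real.rpow_nonneg (show (0:ℝ) ≤ (N:ℝ) by linarith) δ)]
          have h2b : 2 * β₂ ≤ C * κ := by
            rw [div_le_iff₀ hκ] at this; linarith
          have hring : C * (κ / 2) = C * κ / 2 := by ring
          linarith
        calc C * δ * ((n:ℝ) ^ (-α₂) * (n:ℝ) ^ (α - 1))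
            = C * (δ * (n:ℝ) ^ (α - 1)) * (n:ℝ) ^ (-α₂) := by ring
          _ ≤ C * (κ / 2) * (n:ℝ) ^ (-α₂) := by
              apply mul_le_mul_of_nonneg_right _ (Real.rpow_nonneg hn0.le _)
              exact mul_le_mul_of_nonneg_left hd hCpos.le
          _ ≤ (C * κ - β₂) * (n:ℝ) ^ (-α₂) :=
              mul_le_mul_of_nonneg_right hCκ (Real.rpow_nonneg hn0.le _)
      have hcast1 : ((n + 1 : ℕ) : ℝ) = (n:ℝ) + 1 := by push_cast; ring
      rw [hcast1]
      calc |r (n+1)| ≤ g n * (C * (n:ℝ) ^ (-δ)) + h n := by linarith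
        _ ≤ C * (n:ℝ) ^ (-δ) - (C * κ - β₂) * (n:ℝ) ^ (-α₂) := h3
        _ ≤ C * (n:ℝ) ^ (-δ) - C * δ * (n:ℝ) ^ (-δ - 1) := by linarith
        _ ≤ C * ((n:ℝ) + 1) ^ (-δ) := h4
  have hexp : ∀ n : ℕ, (n:ℝ) ^ (α - α₂) = (n:ℝ) ^ (-δ) := by
    intro n; congr 1; simp [hδdef]
  have hO : (fun n => r n) =O[atTop] (fun n : ℕ => (n : ℝ) ^ (α - α₂)) := by
    rw [isBigO_iff]
    refine ⟨C, eventually_atTop.2 ⟨N, fun n hn => ?_⟩⟩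
    rw [Real.norm_eq_abs, Real.norm_eq_abs, hexp n,
      abs_of_nonneg (Real.rpow_nonneg (Nat.cast_nonneg n) _)]
    exact key n hn
  refine ⟨hO, hO.trans_tendsto ?_⟩
  have : Tendsto (fun n : ℕ => (n:ℝ) ^ (-δ)) atTop (nhds 0) :=
    (tendsto_rpow_neg_atTop hδ0).comp hcast
  convert this using 2 with n
  exact hexp n
end

section
/- For a > 1 and z > 2(a−1), the upper incomplete gamma function satisfies Γ(a, z) < 2 z^{a−1} e^{−z}, where Γ(a,z) = ∫_z^∞ t^{a−1} e^{−t} dt. -/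
open Real MeasureTheory

theorem stmt12 (a z : ℝ) (ha : 1 < a) (hz : 2 * (a - 1) < z) :
    ∫ t in Set.Ioi z, t ^ (a - 1) * Real.exp (-t) < 2 * z ^ (a - 1) * Real.exp (-z) := by
  have ha1 : 0 < a - 1 := by linarith
  have hz0 : 0 < z := by linarith
  set f : ℝ → ℝ := fun t => t ^ (a - 1) * Real.exp (-t) with hf
  set g : ℝ → ℝ := fun t => z ^ (a - 1) * Real.exp (-z / 2) * Real.exp (-t / 2) with hg
  -- pointwise strict inequality on Ioi z
  have hlt : ∀ t ∈ Set.Ioi z, f t < g t := by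
    intro t ht
    have htz : z < t := ht
    have ht0 : 0 < t := hz0.trans htz
    have hratio : (1 : ℝ) < t / z := (one_lt_div hz0).mpr htz
    have hlog : Real.log (t / z) ≤ t / z - 1 := Real.log_le_sub_one_of_pos (by positivity)
    have hkey : (a - 1) * Real.log (t / z) < (t - z) / 2 := by
      have h1 : (a - 1) * Real.log (t / z) ≤ (a - 1) * (t / z - 1) :=
        mul_le_mul_of_nonneg_left hlog ha1.le
      have h2 : (a - 1) * (t / z - 1) < (t - z) / 2 := by
        rw [div_sub_one hz0.ne', ← mul_div_assoc, div_lt_div_iff₀ hz0 (by norm_num : (0:ℝ) < 2)]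
        have : 0 < t - z := by linarith
        nlinarith
      linarith
    have hpow : t ^ (a - 1) < z ^ (a - 1) * Real.exp ((t - z) / 2) := by
      have : (t / z) ^ (a - 1) = Real.exp ((a - 1) * Real.log (t / z)) := by
        rw [Real.rpow_def_of_pos (by positivity), mul_comm]
      have h3 : (t / z) ^ (a - 1) < Real.exp ((t - z) / 2) := by
        rw [this]; exact Real.exp_lt_exp.mpr hkey
      have h4 : (t / z) ^ (a - 1) = t ^ (a - 1) / z ^ (a - 1) :=
        Real.div_rpow ht0.le hz0.le _
      rw [h4, div_lt_iff₀ (by positivity)] at h3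
      linarith [h3]
    calc f t = t ^ (a - 1) * Real.exp (-t) := rfl
      _ < z ^ (a - 1) * Real.exp ((t - z) / 2) * Real.exp (-t) := by
          exact mul_lt_mul_of_pos_right hpow (Real.exp_pos _)
      _ = g t := by
          simp only [hg, mul_assoc, ← Real.exp_add]
          congr 1
          rw [Real.exp_eq_exp]
          ring
  -- integrability of f
  have hfint : IntegrableOn f (Set.Ioi z) := by
    have := Real.GammaIntegral_convergent (show (0:ℝ) < a by linarith)
    have h' : IntegrableOn (fun x : ℝ => Real.exp (-x) * x ^ (a - 1)) (Set.Ioi z) :=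
      this.mono_set (Set.Ioi_subset_Ioi hz0.le)
    exact h'.congr_fun (fun x _ => by ring) measurableSet_Ioi
  -- integrability of g
  have hgexp : IntegrableOn (fun t : ℝ => Real.exp (-t / 2)) (Set.Ioi z) := by
    have := exp_neg_integrableOn_Ioi z (show (0:ℝ) < 1/2 by norm_num)
    exact this.congr_fun (fun x _ => by ring_nf) measurableSet_Ioi
  have hgint : IntegrableOn g (Set.Ioi z) := hgexp.const_mul _
  -- value of ∫ g
  have hexpint : ∫ t in Set.Ioi z, Real.exp (-t / 2) = 2 * Real.exp (-z / 2) := by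
    have hderiv : ∀ x ∈ Set.Ici z, HasDerivAt (fun t : ℝ => -2 * Real.exp (-t / 2))
        (Real.exp (-x / 2)) x := by
      intro x _
      have h : HasDerivAt (fun t : ℝ => -t / 2) (-1 / 2) x :=
        (hasDerivAt_id x).neg.div_const 2
      have := (h.exp).const_mul (-2 : ℝ)
      exact this.congr_deriv (by ring)
    have htend : Filter.Tendsto (fun t : ℝ => -2 * Real.exp (-t / 2)) Filter.atTop (nhds 0) := by
      have : Filter.Tendsto (fun t : ℝ => -t / 2) Filter.atTop Filter.atBot := by
        apply Filter.Tendsto.atBot_div_const (by norm_num)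
        exact Filter.tendsto_neg_atBot_iff.mpr Filter.tendsto_id
      have h2 := Real.tendsto_exp_atBot.comp this
      simpa using h2.const_mul (-2 : ℝ)
    have := MeasureTheory.integral_Ioi_of_hasDerivAt_of_tendsto' hderiv hgexp htend
    rw [this]; ring
  have hIg : ∫ t in Set.Ioi z, g t = 2 * z ^ (a - 1) * Real.exp (-z) := by
    rw [hg]
    rw [MeasureTheory.integral_const_mul, hexpint,
      show (-z : ℝ) = -z/2 + -z/2 by ring, Real.exp_add]
    ring
  -- strict inequality of integrals
  have hsub : 0 < ∫ t in Set.Ioi z, (g t - f t) := by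
    rw [setIntegral_pos_iff_support_of_nonneg_ae]
    · have hsup : Function.support (fun t => g t - f t) ∩ Set.Ioi z = Set.Ioi z := by
        apply Set.inter_eq_self_of_subset_right
        intro t ht
        exact ne_of_gt (sub_pos.mpr (hlt t ht))
      rw [hsup]
      simp [hz0]
    · filter_upwards [ae_restrict_mem measurableSet_Ioi] with t ht
      exact le_of_lt (sub_pos.mpr (hlt t ht))
    · exact hgint.sub hfint
  have := MeasureTheory.integral_sub hgint hfint
  rw [this] at hsub
  linarith [hsub, hIg.symm ▸ hsub]
end

section
/- Let Q ~ χ²_d with d ≥ 3 and suppose c > 0, n ∈ ℕ satisfies c²(log n)/2 > d − 2. Then ℙ(Q > c² log n) < (2^{2−d/2}/Γ(d/2)) (c² log n)^{d/2−1} n^{−c²/2}. -/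
open MeasureTheory ProbabilityTheory Real

open Set Filter
open scoped ENNReal

section Aux
lemma lintegral_pi_prod {n : ℕ} (f : Fin n → ℝ → ℝ≥0∞) (hf : ∀ i, Measurable (f i)) :
    ∫⁻ x : Fin n → ℝ, ∏ i, f i (x i) ∂(Measure.pi fun _ => volume) = ∏ i, ∫⁻ y, f i y := by
  induction n with
  | zero => simp
  | succ n ih =>
    have A := (measurePreserving_piFinSuccAbove (fun _ : Fin (n+1) => (volume : Measure ℝ)) 0).symm
    have hm : Measurable fun x : Fin (n+1) → ℝ => ∏ i, f i (x i) :=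
      Finset.measurable_prod _ fun i _ => (hf i).comp (measurable_pi_apply i)
    rw [← A.lintegral_comp hm]
    have : ∀ p : ℝ × (Fin n → ℝ),
        (∏ i, f i (((MeasurableEquiv.piFinSuccAbove (fun _ : Fin (n+1) => ℝ) 0).symm p) i)) =
        f 0 p.1 * ∏ i : Fin n, f i.succ (p.2 i) := by
      intro p
      rw [Fin.prod_univ_succ]
      simp [MeasurableEquiv.piFinSuccAbove_symm_apply, Fin.insertNthEquiv, Fin.insertNth_zero,
        Fin.zero_succAbove]
    simp_rw [this]
    rw [lintegral_prod_mul (f := f 0) (g := fun x : Fin n → ℝ => ∏ i, f i.succ (x i))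
      ((hf 0).aemeasurable)
      ((Finset.measurable_prod _ fun (i : Fin n) _ =>
        (hf i.succ).comp (measurable_pi_apply i)).aemeasurable),
      ih (fun i => f i.succ) (fun i => hf i.succ), Fin.prod_univ_succ]

lemma pi_gauss (d : ℕ) :
    (Measure.pi fun _ : Fin d => gaussianReal 0 1) =
      (volume : Measure (Fin d → ℝ)).withDensity fun x => ∏ i, gaussianPDF 0 1 (x i) := by
  refine Measure.pi_eq fun s hs => ?_
  rw [withDensity_apply _ (MeasurableSet.univ_pi hs), ← lintegral_indicator
    (MeasurableSet.univ_pi hs)]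
  have hind : ∀ x : Fin d → ℝ,
      (univ.pi s).indicator (fun x => ∏ i, gaussianPDF 0 1 (x i)) x
        = ∏ i, (s i).indicator (gaussianPDF 0 1) (x i) := by
    intro x
    by_cases hx : x ∈ univ.pi s
    · rw [Set.indicator_of_mem hx]
      exact Finset.prod_congr rfl fun i _ =>
        (Set.indicator_of_mem (hx i (Set.mem_univ i)) _).symm
    · rw [Set.indicator_of_notMem hx]
      rw [Set.mem_univ_pi] at hx
      push_neg at hx
      obtain ⟨i, hi⟩ := hx
      exact (Finset.prod_eq_zero (Finset.mem_univ i)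
        (Set.indicator_of_notMem hi _)).symm
  simp_rw [hind]
  rw [show (volume : Measure (Fin d → ℝ)) = Measure.pi fun _ => volume from rfl,
    lintegral_pi_prod _ (fun i => (measurable_gaussianPDF 0 1).indicator (hs i))]
  exact Finset.prod_congr rfl fun i _ => by
    rw [lintegral_indicator (hs i), ← gaussianReal_apply 0 one_ne_zero]

lemma tail_integrable {s z : ℝ} (hs : 0 < s) (hz : 0 < z) :
    IntegrableOn (fun u : ℝ => u ^ (s - 1) * Real.exp (-u)) (Ioi z) := by
  have h := (Real.GammaIntegral_convergent hs).mono_set (Ioi_subset_Ioi hz.le)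
  exact h.congr_fun (fun u hu => by ring) measurableSet_Ioi

lemma tail_lt {a z : ℝ} (ha : 1 < a) (hz : 2 * (a - 1) < z) :
    ∫ u in Ioi z, u ^ (a - 1) * Real.exp (-u) < 2 * z ^ (a - 1) * Real.exp (-z) := by
  have hz0 : 0 < z := lt_of_le_of_lt (by linarith) hz
  set g : ℝ → ℝ := fun u => 2 * u ^ (a - 1) * Real.exp (-u) with hg
  set φ : ℝ → ℝ := fun u =>
    2 * ((a - 1) * u ^ (a - 2) * Real.exp (-u) - u ^ (a - 1) * Real.exp (-u)) with hφ
  have hderiv : ∀ x ∈ Ici z, HasDerivAt g (φ x) x := by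
    intro x hx
    have hx0 : x ≠ 0 := (hz0.trans_le hx).ne'
    have h1 : HasDerivAt (fun u : ℝ => u ^ (a - 1)) ((a - 1) * x ^ (a - 1 - 1)) x :=
      Real.hasDerivAt_rpow_const (Or.inl hx0)
    have h2 : HasDerivAt (fun u : ℝ => Real.exp (-u)) (-Real.exp (-x)) x := by
      simpa using ((hasDerivAt_neg x).exp)
    have h3 := (h1.mul h2).const_mul 2
    have h4 : HasDerivAt g (2 * ((a - 1) * x ^ (a - 1 - 1) * Real.exp (-x) + x ^ (a - 1) * -Real.exp (-x))) x := h3.congr_of_eventuallyEq (Filter.Eventually.of_forall fun y => by simp only [hg, Pi.mul_apply]; ring)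
    convert h4 using 1
    · simp only [hφ]; rw [show a - 1 - 1 = a - 2 from by ring]; ring
  have hint1 : IntegrableOn (fun u : ℝ => u ^ (a - 2) * Real.exp (-u)) (Ioi z) := by
    have := tail_integrable (s := a - 1) (by linarith) hz0
    simpa [show a - 1 - 1 = a - 2 by ring] using this
  have hint2 : IntegrableOn (fun u : ℝ => u ^ (a - 1) * Real.exp (-u)) (Ioi z) :=
    tail_integrable (by linarith) hz0
  have hφint : IntegrableOn φ (Ioi z) := by
    refine (((hint1.const_mul (a - 1)).sub hint2).const_mul 2).congr ?_
    filter_upwards with u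
    simp only [hφ, Pi.sub_apply]; ring
  have htend : Tendsto g atTop (nhds 0) := by
    have h4 := (tendsto_rpow_mul_exp_neg_mul_atTop_nhds_zero (a - 1) 1 one_pos).const_mul 2
    simp only [mul_zero] at h4
    refine h4.congr' ?_
    filter_upwards with x
    simp only [hg, neg_mul, one_mul]; ring
  have hFTC : ∫ u in Ioi z, φ u = 0 - g z :=
    integral_Ioi_of_hasDerivAt_of_tendsto' hderiv hφint htend
  have hDpos : ∀ u ∈ Ioi z, 0 < -φ u - u ^ (a - 1) * Real.exp (-u) := by
    intro u hu
    have hu0 : 0 < u := hz0.trans hu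
    have h1 : u ^ (a - 1) = u ^ (a - 2) * u := by
      rw [← Real.rpow_add_one hu0.ne' (a - 2)]; ring_nf
    have hgt : 0 < u ^ (a - 2) * Real.exp (-u) * (u - 2 * (a - 1)) := by
      have h5 : 0 < u - 2 * (a - 1) := by have := hu.out; linarith
      positivity
    calc (0:ℝ) < u ^ (a - 2) * Real.exp (-u) * (u - 2 * (a - 1)) := hgt
      _ = -φ u - u ^ (a - 1) * Real.exp (-u) := by
          simp only [hφ]; rw [h1]; ring
  have hDint : IntegrableOn (fun u => -φ u - u ^ (a - 1) * Real.exp (-u)) (Ioi z) :=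
    hφint.neg.sub hint2
  have hDpos' : 0 < ∫ u in Ioi z, (-φ u - u ^ (a - 1) * Real.exp (-u)) := by
    rw [setIntegral_pos_iff_support_of_nonneg_ae ?_ hDint]
    · refine lt_of_lt_of_le ?_ (measure_mono (subset_inter
        (fun u hu => (hDpos u hu).ne') (subset_refl _)))
      simp [Real.volume_Ioi]
    · filter_upwards [ae_restrict_mem measurableSet_Ioi] with u hu
      exact (hDpos u hu).le
  have hsplit : ∫ u in Ioi z, (-φ u - u ^ (a - 1) * Real.exp (-u))
      = (∫ u in Ioi z, -φ u) - ∫ u in Ioi z, u ^ (a - 1) * Real.exp (-u) :=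
    integral_sub hφint.neg hint2
  rw [integral_neg, hFTC] at hsplit
  have hgz : g z = 2 * z ^ (a - 1) * Real.exp (-z) := rfl
  rw [hsplit] at hDpos'
  linarith

lemma step3 (d : ℕ) (hd : 3 ≤ d) {t : ℝ} (ht : 0 < t) :
    (Measure.pi fun _ : Fin d => gaussianReal 0 1) {x : Fin d → ℝ | t < ∑ i, x i ^ 2}
      = ∫⁻ y in {y : EuclideanSpace ℝ (Fin d) | Real.sqrt t < ‖y‖},
          ENNReal.ofReal ((Real.sqrt (2 * π))⁻¹ ^ d * Real.exp (-‖y‖ ^ 2 / 2)) := by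
  have hS : MeasurableSet {x : Fin d → ℝ | t < ∑ i, x i ^ 2} := by
    apply measurableSet_lt measurable_const
    exact Finset.measurable_sum _ fun i _ => (measurable_pi_apply i).pow_const 2
  rw [pi_gauss, withDensity_apply _ hS]
  have e := (MeasurableEquiv.toLp 2 (Fin d → ℝ)).symm
  rw [← (EuclideanSpace.volume_preserving_symm_measurableEquiv_toLp (Fin d)).setLIntegral_comp_preimage_emb
    ((MeasurableEquiv.toLp 2 (Fin d → ℝ)).symm).measurableEmbedding]
  have hpre : ((MeasurableEquiv.toLp 2 (Fin d → ℝ)).symm) ⁻¹' {x : Fin d → ℝ | t < ∑ i, x i ^ 2}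
      = {y : EuclideanSpace ℝ (Fin d) | Real.sqrt t < ‖y‖} := by
    ext y
    have hnorm : ‖y‖ = Real.sqrt (∑ i, y i ^ 2) := by
      rw [EuclideanSpace.norm_eq]; simp [sq_abs]
    simp only [mem_preimage, mem_setOf_eq, hnorm]
    rw [show (((MeasurableEquiv.toLp 2 (Fin d → ℝ)).symm) y : Fin d → ℝ) = fun i => y i from rfl]
    rw [Real.sqrt_lt_sqrt_iff ht.le]
  rw [hpre]
  refine setLIntegral_congr_fun (by
    exact measurableSet_lt measurable_const continuous_norm.measurable) ?_
  intro y hy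
  have : ∀ i, ((MeasurableEquiv.toLp 2 (Fin d → ℝ)).symm y) i = y i := fun i => rfl
  simp_rw [this]
  rw [show (∏ i, gaussianPDF 0 1 (y i)) = ENNReal.ofReal (∏ i, gaussianPDFReal 0 1 (y i)) by
    rw [ENNReal.ofReal_prod_of_nonneg (fun i _ => gaussianPDFReal_nonneg 0 1 (y i))]; rfl]
  congr 1
  simp only [gaussianPDFReal]
  push_cast
  rw [Finset.prod_mul_distrib, Finset.prod_const, ← Real.exp_sum]
  have hnorm : ‖y‖ = Real.sqrt (∑ i, y i ^ 2) := by
    rw [EuclideanSpace.norm_eq]; simp [sq_abs]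
  rw [hnorm, Real.sq_sqrt (by positivity)]
  congr 1
  · norm_num
  · rw [← Finset.sum_div]
    simp only [sub_zero, mul_one]
    rw [Finset.sum_neg_distrib]

-- constant arithmetic
lemma const_eq (d : ℕ) (hd : 3 ≤ d) :
    (d : ℝ) * (Real.sqrt π ^ d / Real.Gamma ((d : ℝ) / 2 + 1)) * (Real.sqrt (2 * π))⁻¹ ^ d *
      2 ^ ((d : ℝ) / 2 - 1) = 1 / Real.Gamma ((d : ℝ) / 2) := by
  have hπ : (0:ℝ) < π := Real.pi_pos
  have hsπ : Real.sqrt π ≠ 0 := by positivity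
  have h2π : Real.sqrt (2 * π) = Real.sqrt 2 * Real.sqrt π := Real.sqrt_mul (by norm_num) π
  have hs2 : (Real.sqrt 2 : ℝ) ^ d = 2 ^ ((d : ℝ) / 2) := by
    rw [Real.sqrt_eq_rpow, ← Real.rpow_natCast ((2:ℝ) ^ ((1:ℝ)/2)) d,
      ← Real.rpow_mul (by norm_num)]
    ring_nf
  have hΓ : Real.Gamma ((d : ℝ) / 2 + 1) = ((d : ℝ) / 2) * Real.Gamma ((d : ℝ) / 2) := by
    rw [Real.Gamma_add_one (by positivity)]
  have hΓpos : 0 < Real.Gamma ((d : ℝ) / 2) := Real.Gamma_pos_of_pos (by positivity)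
  rw [h2π, mul_inv, mul_pow, hΓ]
  have h2d : (Real.sqrt 2)⁻¹ ^ d * 2 ^ ((d : ℝ) / 2 - 1)
      = 2⁻¹ := by
    rw [inv_pow, hs2, show (d : ℝ) / 2 - 1 = (d : ℝ) / 2 + (-1) by ring,
      Real.rpow_add (by norm_num), Real.rpow_neg_one]
    have : (2 : ℝ) ^ ((d : ℝ) / 2) ≠ 0 := by positivity
    field_simp
  have hπd : (Real.sqrt π) ^ d * ((Real.sqrt π)⁻¹) ^ d = 1 := by
    rw [inv_pow, mul_inv_cancel₀ (by positivity)]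
  have hd0 : (d : ℝ) ≠ 0 := by positivity
  calc (d : ℝ) * (Real.sqrt π ^ d / ((d : ℝ) / 2 * Real.Gamma ((d : ℝ) / 2))) *
        ((Real.sqrt 2)⁻¹ ^ d * (Real.sqrt π)⁻¹ ^ d) * 2 ^ ((d : ℝ) / 2 - 1)
      = (d : ℝ) * (Real.sqrt π ^ d * (Real.sqrt π)⁻¹ ^ d) *
        ((Real.sqrt 2)⁻¹ ^ d * 2 ^ ((d : ℝ) / 2 - 1)) / ((d : ℝ) / 2 * Real.Gamma ((d : ℝ) / 2)) := by
        ring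
    _ = 1 / Real.Gamma ((d : ℝ) / 2) := by
        rw [hπd, h2d]
        field_simp

lemma chi_toReal (d : ℕ) (hd : 3 ≤ d) {t : ℝ} (ht : 0 < t) :
    ((Measure.pi fun _ : Fin d => gaussianReal 0 1) {x : Fin d → ℝ | t < ∑ i, x i ^ 2}).toReal
      = (∫ u in Ioi (t / 2), u ^ ((d : ℝ) / 2 - 1) * Real.exp (-u)) /
          Real.Gamma ((d : ℝ) / 2) := by
  haveI : Nonempty (Fin d) := ⟨⟨0, by omega⟩⟩
  set E := EuclideanSpace ℝ (Fin d)
  set C : ℝ := (Real.sqrt (2 * π))⁻¹ ^ d with hC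
  have hCpos : 0 < C := by positivity
  set A : Set E := {y : E | Real.sqrt t < ‖y‖} with hA
  have hAm : MeasurableSet A := measurableSet_lt measurable_const continuous_norm.measurable
  set F : ℝ → ℝ := (Ioi (Real.sqrt t)).indicator (fun r => C * Real.exp (-r ^ 2 / 2)) with hF
  -- toReal of the lintegral is the Bochner integral
  have h4 : ((Measure.pi fun _ : Fin d => gaussianReal 0 1)
      {x : Fin d → ℝ | t < ∑ i, x i ^ 2}).toReal = ∫ y in A, C * Real.exp (-‖y‖ ^ 2 / 2) := by
    rw [step3 d hd ht, integral_eq_lintegral_of_nonneg_ae (ae_of_all _ fun y => by positivity)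
      (Continuous.aestronglyMeasurable (by fun_prop)).restrict]
  -- rewrite as an integral of a radial indicator over all of E
  have h5 : ∫ y in A, C * Real.exp (-‖y‖ ^ 2 / 2) = ∫ y : E, F ‖y‖ := by
    rw [← integral_indicator hAm]
    congr 1
  -- polar coordinates
  have hdim : Module.finrank ℝ E = d := finrank_euclideanSpace_fin
  have h6 : ∫ y : E, F ‖y‖ = (d : ℝ) * ((volume (Metric.ball (0 : E) 1)).toReal *
      ∫ r in Ioi (0 : ℝ), r ^ (d - 1) • F r) := by
    rw [integral_fun_norm_addHaar (volume : Measure E) F, hdim, nsmul_eq_mul, smul_eq_mul, measureReal_def]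
  -- the ball volume
  have hΓ1pos : 0 < Real.Gamma ((d : ℝ) / 2 + 1) := Real.Gamma_pos_of_pos (by positivity)
  have hVb : (volume (Metric.ball (0 : E) 1)).toReal
      = Real.sqrt π ^ d / Real.Gamma ((d : ℝ) / 2 + 1) := by
    rw [EuclideanSpace.volume_ball, Fintype.card_fin, ENNReal.ofReal_one, one_pow, one_mul,
      ENNReal.toReal_ofReal (by positivity)]
  -- the radial integral restricted to Ioi (sqrt t)
  have h7 : ∫ r in Ioi (0 : ℝ), r ^ (d - 1) • F r
      = ∫ r in Ioi (Real.sqrt t), r ^ (d - 1) * (C * Real.exp (-r ^ 2 / 2)) := by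
    have : ∀ r : ℝ, r ^ (d - 1) • F r
        = (Ioi (Real.sqrt t)).indicator (fun r => r ^ (d - 1) * (C * Real.exp (-r ^ 2 / 2))) r := by
      intro r
      by_cases hr : r ∈ Ioi (Real.sqrt t) <;>
        simp [hF, Set.indicator_of_mem, Set.indicator_of_notMem, hr]
    simp_rw [this]
    rw [setIntegral_indicator measurableSet_Ioi, Ioi_inter_Ioi,
      max_eq_right (Real.sqrt_nonneg t)]
  set T : ℝ := ∫ u in Ioi (t / 2), u ^ ((d : ℝ) / 2 - 1) * Real.exp (-u) with hT
  have himg : (fun r : ℝ => r ^ 2 / 2) '' Ioi (Real.sqrt t) = Ioi (t / 2) := by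
    ext u
    simp only [mem_image, mem_Ioi]
    constructor
    · rintro ⟨r, hr, rfl⟩
      nlinarith [Real.sq_sqrt ht.le, Real.sqrt_nonneg t]
    · intro hu
      have h2u : 0 < 2 * u := by nlinarith
      refine ⟨Real.sqrt (2 * u), Real.sqrt_lt_sqrt ht.le (by linarith), ?_⟩
      rw [Real.sq_sqrt h2u.le]; ring
  have hder : ∀ x ∈ Ioi (Real.sqrt t),
      HasDerivWithinAt (fun r : ℝ => r ^ 2 / 2) x (Ioi (Real.sqrt t)) x := by
    intro x hx
    have h := ((hasDerivAt_pow 2 x).div_const 2).hasDerivWithinAt (s := Ioi (Real.sqrt t))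
    exact h.congr_deriv (by norm_num)
  have hinj : InjOn (fun r : ℝ => r ^ 2 / 2) (Ioi (Real.sqrt t)) := by
    intro a ha b hb hab
    have ha0 : 0 ≤ a := (Real.sqrt_nonneg t).trans (le_of_lt ha)
    have hb0 : 0 ≤ b := (Real.sqrt_nonneg t).trans (le_of_lt hb)
    have hsq : a ^ 2 = b ^ 2 := by
      simp only at hab
      linarith
    rw [← Real.sqrt_sq ha0, ← Real.sqrt_sq hb0, hsq]
  have hsub : T = ∫ r in Ioi (Real.sqrt t),
      |r| • ((r ^ 2 / 2) ^ ((d : ℝ) / 2 - 1) * Real.exp (-(r ^ 2 / 2))) := by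
    rw [hT, ← himg, integral_image_eq_integral_abs_deriv_smul measurableSet_Ioi hder hinj]
  set Ir : ℝ := ∫ r in Ioi (Real.sqrt t), r ^ (d - 1) * Real.exp (-r ^ 2 / 2) with hIr
  have hpt : ∀ r ∈ Ioi (Real.sqrt t),
      |r| • ((r ^ 2 / 2) ^ ((d : ℝ) / 2 - 1) * Real.exp (-(r ^ 2 / 2)))
        = 2 ^ (1 - (d : ℝ) / 2) * (r ^ (d - 1) * Real.exp (-r ^ 2 / 2)) := by
    intro r hr
    have hr0 : 0 < r := (Real.sqrt_nonneg t).trans_lt hr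
    have e1 : (r ^ 2 / 2 : ℝ) ^ ((d : ℝ) / 2 - 1)
        = r ^ ((d : ℝ) - 2) / 2 ^ ((d : ℝ) / 2 - 1) := by
      rw [Real.div_rpow (sq_nonneg r) (by norm_num : (0:ℝ) ≤ 2), ← Real.rpow_natCast r 2,
        ← Real.rpow_mul hr0.le]
      congr 2
      push_cast
      ring
    have e2 : r * r ^ ((d : ℝ) - 2) = (r : ℝ) ^ (d - 1 : ℕ) := by
      rw [← Real.rpow_natCast r (d - 1), mul_comm, ← Real.rpow_add_one hr0.ne' ((d : ℝ) - 2)]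
      congr 1
      push_cast [Nat.cast_sub (show 1 ≤ d by omega)]
      ring
    have e3 : (2 : ℝ) ^ (1 - (d : ℝ) / 2) = (2 ^ ((d : ℝ) / 2 - 1))⁻¹ := by
      rw [← Real.rpow_neg (by norm_num : (0:ℝ) ≤ 2)]
      congr 1
      ring
    have h2pos : (0:ℝ) < 2 ^ ((d : ℝ) / 2 - 1) := Real.rpow_pos_of_pos (by norm_num) _
    rw [smul_eq_mul, abs_of_pos hr0, e1, e3, show -(r ^ 2 / 2) = -r ^ 2 / 2 by ring, ← e2]
    field_simp
  have hTIr : T = 2 ^ (1 - (d : ℝ) / 2) * Ir := by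
    rw [hsub, setIntegral_congr_fun measurableSet_Ioi hpt, integral_const_mul]
  have h2ne : (2:ℝ) ^ ((d : ℝ) / 2 - 1) * 2 ^ (1 - (d : ℝ) / 2) = 1 := by
    rw [← Real.rpow_add (by norm_num : (0:ℝ) < 2)]
    norm_num
  have h8 : ∫ r in Ioi (Real.sqrt t), r ^ (d - 1) * (C * Real.exp (-r ^ 2 / 2)) = C * Ir := by
    rw [hIr, ← integral_const_mul]
    exact setIntegral_congr_fun measurableSet_Ioi fun r _ => by ring
  rw [h4, h5, h6, hVb, h7, h8]
  have key : (d : ℝ) * (Real.sqrt π ^ d / Real.Gamma ((d : ℝ) / 2 + 1) * (C * Ir))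
      = ((d : ℝ) * (Real.sqrt π ^ d / Real.Gamma ((d : ℝ) / 2 + 1)) * C * 2 ^ ((d : ℝ) / 2 - 1))
        * T := by
    rw [hTIr]
    linear_combination (-((d : ℝ) * (Real.sqrt π ^ d / Real.Gamma ((d : ℝ) / 2 + 1)) * C * Ir)) * h2ne
  rw [key, hC, const_eq d hd]
  ring

end Aux

theorem stmt13 (d : ℕ) (hd : 3 ≤ d) (c : ℝ) (hc : 0 < c) (n : ℕ)
    (hcn : (d : ℝ) - 2 < c ^ 2 * Real.log n / 2) :
    ((Measure.pi fun _ : Fin d => gaussianReal 0 1)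
        {x : Fin d → ℝ | c ^ 2 * Real.log n < ∑ i, x i ^ 2}).toReal <
      2 ^ (2 - (d : ℝ) / 2) / Real.Gamma ((d : ℝ) / 2) *
        (c ^ 2 * Real.log n) ^ ((d : ℝ) / 2 - 1) * (n : ℝ) ^ (-(c ^ 2) / 2) := by
  have hd3 : (3 : ℝ) ≤ (d : ℝ) := by exact_mod_cast hd
  set t : ℝ := c ^ 2 * Real.log n with htdef
  have ht2 : (d : ℝ) - 2 < t / 2 := hcn
  have ht : 0 < t := by nlinarith
  have hlogn : 0 < Real.log n := by
    by_contra h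
    push_neg at h
    nlinarith [mul_nonneg (sq_nonneg c) (neg_nonneg.mpr h)]
  have hn0 : (0 : ℝ) < n := by
    rcases Nat.eq_zero_or_pos n with rfl | h
    · simp at hlogn
    · exact_mod_cast h
  have hnpow : (n : ℝ) ^ (-(c ^ 2) / 2) = Real.exp (-(t / 2)) := by
    rw [Real.rpow_def_of_pos hn0]
    congr 1
    rw [htdef]; ring
  have hΓpos : 0 < Real.Gamma ((d : ℝ) / 2) := Real.Gamma_pos_of_pos (by positivity)
  have htail := tail_lt (a := (d : ℝ) / 2) (z := t / 2) (by linarith) (by linarith)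
  rw [chi_toReal d hd ht, hnpow]
  calc (∫ u in Ioi (t / 2), u ^ ((d : ℝ) / 2 - 1) * Real.exp (-u)) / Real.Gamma ((d : ℝ) / 2)
      < (2 * (t / 2) ^ ((d : ℝ) / 2 - 1) * Real.exp (-(t / 2))) / Real.Gamma ((d : ℝ) / 2) := by
        gcongr
    _ = 2 ^ (2 - (d : ℝ) / 2) / Real.Gamma ((d : ℝ) / 2) * t ^ ((d : ℝ) / 2 - 1)
          * Real.exp (-(t / 2)) := by
        rw [Real.div_rpow ht.le (by norm_num : (0:ℝ) ≤ 2)]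
        have h2 : (2:ℝ) ^ (2 - (d : ℝ) / 2) * 2 ^ ((d : ℝ) / 2 - 1) = 2 := by
          rw [← Real.rpow_add (by norm_num : (0:ℝ) < 2)]
          norm_num
        have h2pos : (0:ℝ) < 2 ^ ((d : ℝ) / 2 - 1) := Real.rpow_pos_of_pos (by norm_num) _
        have h2' : (2:ℝ) ^ (2 - (d : ℝ) / 2) = 2 / 2 ^ ((d : ℝ) / 2 - 1) := by
          rw [eq_div_iff h2pos.ne']
          exact h2
        rw [h2']
        ring
end

section
/- Let κ > 0, 0 < α < α₂ < 1, β₂ > 0, z₁ = κ/(1−α), z₂ = β₂/(1−α₂). Define K(x) = β₂ e^{−z₁ x^{1−α}} e^{−z₂ x^{1−α₂}} ∫_{n₀}^x s^{−α₂} e^{z₁(s+1)^{1−α}} e^{z₂(s+1)^{1−α₂}} ds and Z(x) = β₂ κ^{−1} x^{α−α₂}. Then lim_{x→∞} K(x)/Z(x) = 1; i.e., K(x) ~ β₂ κ^{−1} x^{α−α₂} as x → ∞. -/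
open Real Filter

lemma diff_rpow_tendsto {p : ℝ} (hp0 : 0 < p) (hp1 : p < 1) :
    Tendsto (fun x : ℝ => (x + 1) ^ p - x ^ p) atTop (nhds 0) := by
  have hub : ∀ᶠ x : ℝ in atTop, (x + 1) ^ p - x ^ p ≤ p * x ^ (p - 1) := by
    filter_upwards [eventually_ge_atTop (1:ℝ)] with x hx
    have hx0 : (0:ℝ) < x := by linarith
    obtain ⟨c, hc, hceq⟩ := exists_hasDerivAt_eq_slope (fun t => t ^ p)
      (fun t => p * t ^ (p - 1)) (by linarith : x < x + 1)
      (ContinuousOn.rpow_const continuousOn_id (fun t ht => Or.inl (by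
        simp only [Set.mem_Icc] at ht; intro h; simp [h] at ht; linarith)))
      (fun t ht => by
        have : t ≠ 0 := by rcases ht with ⟨h1, _⟩; intro h; rw [h] at h1; linarith
        simpa using Real.hasDerivAt_rpow_const (Or.inl this))
    have : (x + 1) ^ p - x ^ p = p * c ^ (p - 1) := by
      rw [hceq]; ring_nf
    rw [this]
    have hcx : x ≤ c := le_of_lt hc.1
    have := Real.rpow_le_rpow_of_nonpos hx0 hcx (by linarith : p - 1 ≤ 0)
    nlinarith [this, hp0]
  have hlb : ∀ᶠ x : ℝ in atTop, (0:ℝ) ≤ (x + 1) ^ p - x ^ p := by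
    filter_upwards [eventually_ge_atTop (0:ℝ)] with x hx
    have := Real.rpow_le_rpow hx (by linarith : x ≤ x + 1) hp0.le
    linarith
  have hto : Tendsto (fun x : ℝ => p * x ^ (p - 1)) atTop (nhds 0) := by
    have := (tendsto_rpow_neg_atTop (by linarith : 0 < 1 - p)).const_mul p
    simpa [neg_sub] using this
  exact tendsto_of_tendsto_of_tendsto_of_le_of_le' tendsto_const_nhds hto hlb hub

open intervalIntegral MeasureTheory in

lemma my_lhopital {φ g g' : ℝ → ℝ} {n₀ : ℝ}
    (hφ : ContinuousOn φ (Set.Ici n₀))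
    (hg'c : ContinuousOn g' (Set.Ici n₀))
    (hg : ∀ x ∈ Set.Ici n₀, HasDerivAt g (g' x) x)
    (hgtop : Tendsto g atTop atTop)
    (hratio : Tendsto (fun x => φ x / g' x) atTop (nhds 1))
    (hg'pos : ∀ᶠ x in atTop, 0 < g' x) :
    Tendsto (fun x => (∫ s in n₀..x, φ s) / g x) atTop (nhds 1) := by
  rw [Metric.tendsto_atTop]
  intro ε hε
  set δ : ℝ := min (ε / 4) (1 / 2) with hδ
  have hδ0 : 0 < δ := lt_min (by positivity) (by norm_num)
  have hδ2 : δ ≤ 1 / 2 := min_le_right _ _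
  have hδε : δ ≤ ε / 4 := min_le_left _ _
  obtain ⟨a₁, ha₁⟩ := (Metric.tendsto_atTop.mp hratio) δ hδ0
  obtain ⟨a₂, ha₂⟩ := eventually_atTop.mp hg'pos
  set a : ℝ := max n₀ (max a₁ a₂) with ha
  have han₀ : n₀ ≤ a := le_max_left _ _
  have hbound : ∀ s, a ≤ s → (1 - δ) * g' s ≤ φ s ∧ φ s ≤ (1 + δ) * g' s := by
    intro s hs
    have hs1 : a₁ ≤ s := le_trans (le_trans (le_max_left _ _) (le_max_right _ _)) hs
    have hs2 : a₂ ≤ s := le_trans (le_trans (le_max_right _ _) (le_max_right _ _)) hs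
    have hgp : 0 < g' s := ha₂ s hs2
    have hd := ha₁ s hs1
    rw [Real.dist_eq, abs_lt] at hd
    have hφs : φ s = (φ s / g' s) * g' s := by field_simp
    exact ⟨by rw [hφs]; nlinarith [hd.1], by rw [hφs]; nlinarith [hd.2]⟩
  set C : ℝ := ∫ s in n₀..a, φ s with hC
  set D : ℝ := |C| + 2 * |g a| with hD
  have hD0 : 0 ≤ D := by positivity
  -- eventually g x large
  have hglarge : ∀ᶠ x in atTop, (2 / ε) * D + 1 ≤ g x := hgtop.eventually_ge_atTop _
  obtain ⟨a₃, ha₃⟩ := eventually_atTop.mp hglarge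
  refine ⟨max a a₃, fun x hx => ?_⟩
  have hxa : a ≤ x := le_trans (le_max_left _ _) hx
  have hxn₀ : n₀ ≤ x := le_trans han₀ hxa
  have hgx : (2 / ε) * D + 1 ≤ g x := ha₃ x (le_trans (le_max_right _ _) hx)
  have h2ε : 0 ≤ 2 / ε * D := by positivity
  have hgx0 : 0 < g x := by nlinarith
  -- integrability
  have hsub1 : Set.uIcc n₀ a ⊆ Set.Ici n₀ := by
    rw [Set.uIcc_of_le han₀]; exact Set.Icc_subset_Ici_self
  have hsub2 : Set.uIcc a x ⊆ Set.Ici n₀ := by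
    rw [Set.uIcc_of_le hxa]
    exact le_trans Set.Icc_subset_Ici_self (Set.Ici_subset_Ici.mpr han₀)
  have hint1 : IntervalIntegrable φ MeasureTheory.volume n₀ a :=
    (hφ.mono hsub1).intervalIntegrable
  have hint2 : IntervalIntegrable φ MeasureTheory.volume a x :=
    (hφ.mono hsub2).intervalIntegrable
  have hintg' : IntervalIntegrable g' MeasureTheory.volume a x :=
    (hg'c.mono hsub2).intervalIntegrable
  have hsplit : (∫ s in n₀..x, φ s) = C + ∫ s in a..x, φ s := by
    rw [hC]; exact (integral_add_adjacent_intervals hint1 hint2).symm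
  have hftc : (∫ s in a..x, g' s) = g x - g a := by
    refine integral_eq_sub_of_hasDerivAt (fun t ht => hg t (hsub2 ht)) hintg'
  set I : ℝ := ∫ s in a..x, φ s with hI
  have hIub : I ≤ (1 + δ) * (g x - g a) := by
    have : I ≤ ∫ s in a..x, (1 + δ) * g' s := by
      refine integral_mono_on hxa hint2 (hintg'.const_mul _) ?_
      intro s hs; exact (hbound s hs.1).2
    rwa [intervalIntegral.integral_const_mul, hftc] at this
  have hIlb : (1 - δ) * (g x - g a) ≤ I := by
    have : (∫ s in a..x, (1 - δ) * g' s) ≤ I := by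
      refine integral_mono_on hxa (hintg'.const_mul _) hint2 ?_
      intro s hs; exact (hbound s hs.1).1
    rwa [intervalIntegral.integral_const_mul, hftc] at this
  -- final estimates
  have key : |C + I - g x| ≤ D + δ * g x := by
    rw [abs_le]
    constructor
    · nlinarith [abs_nonneg C, neg_abs_le C, le_abs_self C, neg_abs_le (g a), le_abs_self (g a)]
    · nlinarith [abs_nonneg C, neg_abs_le C, le_abs_self C, neg_abs_le (g a), le_abs_self (g a)]
  have hDgx : D / g x < ε / 2 := by
    rw [div_lt_iff₀ hgx0]
    have hcanc : ε / 2 * (2 / ε * D) = D := by field_simp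
    nlinarith
  rw [Real.dist_eq, hsplit]
  have : (C + I) / g x - 1 = (C + I - g x) / g x := by field_simp
  rw [this, abs_div, abs_of_pos hgx0]
  have heq2 : (D + δ * g x) / g x = D / g x + δ := by field_simp
  calc |C + I - g x| / g x ≤ (D + δ * g x) / g x := by gcongr
    _ = D / g x + δ := heq2
    _ < ε := by linarith

open intervalIntegral in
theorem stmt17 (κ β₂ α α₂ z₁ z₂ n₀ : ℝ)
    (hκ : 0 < κ) (hβ₂ : 0 < β₂) (hα : 0 < α) (hαα₂ : α < α₂) (hα₂ : α₂ < 1)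
    (hz₁ : z₁ = κ / (1 - α)) (hz₂ : z₂ = β₂ / (1 - α₂)) (hn₀ : 0 < n₀)
    (K Z : ℝ → ℝ)
    (hK : ∀ x, K x = β₂ * Real.exp (-z₁ * x ^ (1 - α)) * Real.exp (-z₂ * x ^ (1 - α₂)) *
      ∫ s in n₀..x, s ^ (-α₂) * Real.exp (z₁ * (s + 1) ^ (1 - α)) *
        Real.exp (z₂ * (s + 1) ^ (1 - α₂)))
    (hZ : ∀ x, Z x = β₂ * κ⁻¹ * x ^ (α - α₂)) :
    Tendsto (fun x => K x / Z x) atTop (nhds 1) := by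
  have hα1 : α < 1 := lt_trans hαα₂ hα₂
  have h1α : (0:ℝ) < 1 - α := by linarith
  have h1α₂ : (0:ℝ) < 1 - α₂ := by linarith
  have hz₁pos : 0 < z₁ := by rw [hz₁]; positivity
  have hz₂pos : 0 < z₂ := by rw [hz₂]; positivity
  have hz1κ : z₁ * (1 - α) = κ := by rw [hz₁]; field_simp
  have hz2β : z₂ * (1 - α₂) = β₂ := by rw [hz₂]; field_simp
  set φ : ℝ → ℝ := fun s => s ^ (-α₂) * Real.exp (z₁ * (s + 1) ^ (1 - α)) *
      Real.exp (z₂ * (s + 1) ^ (1 - α₂)) with hφdef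
  set E : ℝ → ℝ := fun x => Real.exp (z₁ * x ^ (1 - α)) * Real.exp (z₂ * x ^ (1 - α₂)) with hEdef
  set d : ℝ → ℝ := fun x => (α - α₂) * x ^ (α - 1) + κ + β₂ * x ^ (α - α₂) with hddef
  set g : ℝ → ℝ := fun x => κ⁻¹ * x ^ (α - α₂) * E x with hgdef
  set g' : ℝ → ℝ := fun x => x ^ (-α₂) * E x * (κ⁻¹ * d x) with hg'def
  -- d tends to κ
  have hdtend : Tendsto d atTop (nhds κ) := by
    have h1 : Tendsto (fun x : ℝ => (α - α₂) * x ^ (α - 1)) atTop (nhds 0) := by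
      have := (tendsto_rpow_neg_atTop (by linarith : (0:ℝ) < 1 - α)).const_mul (α - α₂)
      simpa [neg_sub] using this
    have h2 : Tendsto (fun x : ℝ => β₂ * x ^ (α - α₂)) atTop (nhds 0) := by
      have := (tendsto_rpow_neg_atTop (by linarith : (0:ℝ) < α₂ - α)).const_mul β₂
      simpa [neg_sub] using this
    have h3 : Tendsto (fun x : ℝ => ((α - α₂) * x ^ (α - 1) + κ) + β₂ * x ^ (α - α₂))
        atTop (nhds ((0 + κ) + 0)) :=
      (h1.add (tendsto_const_nhds : Tendsto (fun _ : ℝ => κ) atTop (nhds κ))).add h2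
    simpa using h3
  have hdpos : ∀ᶠ x in atTop, 0 < d x := hdtend.eventually (eventually_gt_nhds hκ)
  -- continuity of φ on Ici n₀
  have hφc : ContinuousOn φ (Set.Ici n₀) := by
    intro s hs
    have hs0 : s ≠ 0 := by have := hs; simp only [Set.mem_Ici] at this; nlinarith [hn₀]
    apply ContinuousAt.continuousWithinAt
    have hs1 : ContinuousAt (fun s : ℝ => s + 1) s := by fun_prop
    exact ((Real.continuousAt_rpow_const s (-α₂) (Or.inl hs0)).mul
      (Real.continuous_exp.continuousAt.comp
        ((hs1.rpow_const (Or.inl (by simp only [Set.mem_Ici] at hs; nlinarith [hn₀]))).const_smul z₁))).mul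
      (Real.continuous_exp.continuousAt.comp
        ((hs1.rpow_const (Or.inl (by simp only [Set.mem_Ici] at hs; nlinarith [hn₀]))).const_smul z₂))
  -- continuity of g' on Ici n₀
  have hg'c : ContinuousOn g' (Set.Ici n₀) := by
    intro x hx
    have hx0 : x ≠ 0 := by simp only [Set.mem_Ici] at hx; nlinarith [hn₀]
    apply ContinuousAt.continuousWithinAt
    have hE : ContinuousAt E x :=
      (Real.continuous_exp.continuousAt.comp
        ((Real.continuousAt_rpow_const x (1 - α) (Or.inl hx0)).const_smul z₁)).mul
      (Real.continuous_exp.continuousAt.comp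
        ((Real.continuousAt_rpow_const x (1 - α₂) (Or.inl hx0)).const_smul z₂))
    have hd : ContinuousAt d x :=
      (((Real.continuousAt_rpow_const x (α - 1) (Or.inl hx0)).const_smul (α - α₂)).add
        continuousAt_const).add
        ((Real.continuousAt_rpow_const x (α - α₂) (Or.inl hx0)).const_smul β₂)
    exact ((Real.continuousAt_rpow_const x (-α₂) (Or.inl hx0)).mul hE).mul
      (continuousAt_const.mul hd)
  -- derivative
  have hder : ∀ x ∈ Set.Ici n₀, HasDerivAt g (g' x) x := by
    intro x hx
    have hx0 : 0 < x := lt_of_lt_of_le hn₀ hx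
    have h1 : HasDerivAt (fun t : ℝ => t ^ (α - α₂)) ((α - α₂) * x ^ (α - α₂ - 1)) x :=
      Real.hasDerivAt_rpow_const (Or.inl hx0.ne')
    have h2 : HasDerivAt (fun t : ℝ => Real.exp (z₁ * t ^ (1 - α)))
        (Real.exp (z₁ * x ^ (1 - α)) * (z₁ * ((1 - α) * x ^ (1 - α - 1)))) x :=
      ((Real.hasDerivAt_rpow_const (Or.inl hx0.ne')).const_mul z₁).exp
    have h3 : HasDerivAt (fun t : ℝ => Real.exp (z₂ * t ^ (1 - α₂)))
        (Real.exp (z₂ * x ^ (1 - α₂)) * (z₂ * ((1 - α₂) * x ^ (1 - α₂ - 1)))) x :=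
      ((Real.hasDerivAt_rpow_const (Or.inl hx0.ne')).const_mul z₂).exp
    have hprod := (h1.mul (h2.mul h3)).const_mul κ⁻¹
    have hgeq : g = fun x : ℝ => κ⁻¹ * (x ^ (α - α₂) *
        (Real.exp (z₁ * x ^ (1 - α)) * Real.exp (z₂ * x ^ (1 - α₂)))) := by
      funext t; simp only [hgdef, hEdef]; ring
    rw [hgeq]
    refine hprod.congr_deriv ?_
    symm
    have e1 : x ^ (-α₂) * x ^ (α - 1) = x ^ (α - α₂ - 1) := by
      rw [← Real.rpow_add hx0]; congr 1; ring
    have e2 : x ^ (α - α₂) * x ^ (1 - α - 1) = x ^ (-α₂) := by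
      rw [← Real.rpow_add hx0]; congr 1; ring
    have e3 : x ^ (α - α₂) * x ^ (1 - α₂ - 1) = x ^ (-α₂) * x ^ (α - α₂) := by
      rw [← Real.rpow_add hx0, ← Real.rpow_add hx0]; congr 1; ring
    simp only [hg'def, hEdef, hddef, Pi.mul_apply]
    set A := Real.exp (z₁ * x ^ (1 - α)) with hA
    set B := Real.exp (z₂ * x ^ (1 - α₂)) with hB
    linear_combination (κ⁻¹ * (α - α₂) * A * B) * e1 + (-(κ⁻¹ * z₁ * (1 - α) * A * B)) * e2 +
      (-(κ⁻¹ * z₂ * (1 - α₂) * A * B)) * e3 + (-(κ⁻¹ * x ^ (-α₂) * A * B)) * hz1κ +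
      (-(κ⁻¹ * (x ^ (-α₂) * x ^ (α - α₂)) * A * B)) * hz2β
  -- g tends to atTop
  have hgtop : Tendsto g atTop atTop := by
    have hlog : (fun x : ℝ => (α - α₂) * Real.log x) =o[atTop] fun x : ℝ => x ^ (1 - α) :=
      (isLittleO_log_rpow_atTop h1α).const_mul_left (α - α₂)
    have hev := hlog.bound (show (0:ℝ) < z₁ / 2 by positivity)
    have hexp_lower : ∀ᶠ x in atTop, (z₁ / 2) * x ^ (1 - α) ≤
        z₁ * x ^ (1 - α) + z₂ * x ^ (1 - α₂) + (α - α₂) * Real.log x := by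
      filter_upwards [hev, eventually_ge_atTop (0:ℝ)] with x hx hx0
      have h1 : (0:ℝ) ≤ x ^ (1 - α) := Real.rpow_nonneg hx0 _
      have h2 : (0:ℝ) ≤ z₂ * x ^ (1 - α₂) :=
        mul_nonneg hz₂pos.le (Real.rpow_nonneg hx0 _)
      rw [Real.norm_eq_abs, Real.norm_eq_abs, abs_of_nonneg h1] at hx
      have h3 := neg_abs_le ((α - α₂) * Real.log x)
      linarith
    have hexpto : Tendsto (fun x : ℝ => z₁ * x ^ (1 - α) + z₂ * x ^ (1 - α₂) +
        (α - α₂) * Real.log x) atTop atTop :=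
      tendsto_atTop_mono' atTop hexp_lower
        (Tendsto.const_mul_atTop (show (0:ℝ) < z₁ / 2 by positivity) (tendsto_rpow_atTop h1α))
    have hcomp := Real.tendsto_exp_atTop.comp hexpto
    apply Tendsto.congr' ?_ (Tendsto.const_mul_atTop (inv_pos.mpr hκ) hcomp)
    filter_upwards [eventually_gt_atTop (0:ℝ)] with x hx0
    simp only [hgdef, hEdef, Function.comp_apply]
    rw [Real.exp_add, Real.exp_add, Real.rpow_def_of_pos hx0 (α - α₂)]
    ring_nf
  -- ratio tends to 1
  set Dd : ℝ → ℝ := fun x => z₁ * ((x + 1) ^ (1 - α) - x ^ (1 - α)) +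
      z₂ * ((x + 1) ^ (1 - α₂) - x ^ (1 - α₂)) with hDddef
  have hDto : Tendsto Dd atTop (nhds 0) := by
    have h := ((diff_rpow_tendsto h1α (by linarith)).const_mul z₁).add
      ((diff_rpow_tendsto h1α₂ (by linarith)).const_mul z₂)
    simpa using h
  have hexpD : Tendsto (fun x => Real.exp (Dd x)) atTop (nhds 1) := by
    have h := (Real.continuous_exp.tendsto 0).comp hDto
    simpa [Function.comp_def] using h
  have hratio : Tendsto (fun x => φ x / g' x) atTop (nhds 1) := by
    have hmain : Tendsto (fun x => κ * Real.exp (Dd x) / d x) atTop (nhds (κ * 1 / κ)) :=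
      (hexpD.const_mul κ).div hdtend hκ.ne'
    rw [show κ * 1 / κ = 1 by field_simp] at hmain
    apply Tendsto.congr' ?_ hmain
    filter_upwards [hdpos, eventually_gt_atTop (0:ℝ)] with x hdx hx0
    have hxne : x ^ (-α₂) ≠ 0 := (Real.rpow_pos_of_pos hx0 _).ne'
    have key : Real.exp (z₁ * (x + 1) ^ (1 - α)) * Real.exp (z₂ * (x + 1) ^ (1 - α₂)) =
        Real.exp (Dd x) * (Real.exp (z₁ * x ^ (1 - α)) * Real.exp (z₂ * x ^ (1 - α₂))) := by
      rw [← Real.exp_add, ← Real.exp_add, ← Real.exp_add]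
      congr 1; simp only [hDddef]; ring
    simp only [hφdef, hg'def, hEdef]
    rw [mul_assoc, key]
    field_simp
  -- positivity of g'
  have hg'pos : ∀ᶠ x in atTop, 0 < g' x := by
    filter_upwards [hdpos, eventually_gt_atTop (0:ℝ)] with x hdx hx0
    exact mul_pos (mul_pos (Real.rpow_pos_of_pos hx0 _)
      (mul_pos (Real.exp_pos _) (Real.exp_pos _))) (mul_pos (inv_pos.mpr hκ) hdx)
  -- conclude
  have hfinal := my_lhopital hφc hg'c hder hgtop hratio hg'pos
  apply Tendsto.congr' ?_ hfinal
  filter_upwards [eventually_gt_atTop (0:ℝ)] with x hx0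
  rw [hK, hZ]
  simp only [hgdef, hEdef]
  rw [show -z₁ * x ^ (1 - α) = -(z₁ * x ^ (1 - α)) by ring, Real.exp_neg,
    show -z₂ * x ^ (1 - α₂) = -(z₂ * x ^ (1 - α₂)) by ring, Real.exp_neg]
  have hxq : x ^ (α - α₂) ≠ 0 := (Real.rpow_pos_of_pos hx0 _).ne'
  field_simp
end

section
/- Let G : [𝔣*, 𝔣_max] → [0,1] be a nondecreasing function and suppose there is L > 0 such that (G(𝔣+δ) − G(𝔣))/δ > L for all 𝔣 in an interval and all δ > 0 (strict L-increase). Let F_N be another nondecreasing function (an empirical approximation). If f̂ and f satisfy F_N(f̂) = G(f), then |f̂ − f| ≤ (1/L)( 2|G(f) − F_N(f)| + |G(f̂) − F_N(f̂)| ). -/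
theorem stmt19 (G FN : ℝ → ℝ) (hG : Monotone G) (hFN : Monotone FN)
    (L : ℝ) (hL : 0 < L) (I : Set ℝ) (hI : I.OrdConnected)
    (hLinc : ∀ 𝔣 ∈ I, ∀ δ : ℝ, 0 < δ → L < (G (𝔣 + δ) - G 𝔣) / δ)
    (f fhat : ℝ) (hf : f ∈ I) (hfhat : fhat ∈ I)
    (hdef : FN fhat = G f) :
    |fhat - f| ≤ (1 / L) * (2 * |G f - FN f| + |G fhat - FN fhat|) := by
  have key : L * |fhat - f| ≤ |G fhat - FN fhat| := by
    rcases lt_trichotomy fhat f with h | h | h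
    · have h0 := hLinc fhat hfhat (f - fhat) (by linarith)
      rw [show fhat + (f - fhat) = f by ring, lt_div_iff₀ (by linarith)] at h0
      rw [abs_of_neg (by linarith : fhat - f < 0)]
      have h2 : G f - G fhat ≤ |G fhat - FN fhat| := by
        rw [← hdef]
        linarith [neg_le_abs (G fhat - FN fhat)]
      nlinarith
    · simp [h, abs_nonneg, mul_nonneg hL.le (abs_nonneg (G fhat - FN fhat))]
    · have h0 := hLinc f hf (fhat - f) (by linarith)
      rw [show f + (fhat - f) = fhat by ring, lt_div_iff₀ (by linarith)] at h0
      rw [abs_of_pos (by linarith : 0 < fhat - f)]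
      have h2 : G fhat - G f ≤ |G fhat - FN fhat| := by
        rw [← hdef]
        exact le_abs_self _
      nlinarith
  have habs : 0 ≤ |G f - FN f| := abs_nonneg _
  rw [one_div, inv_mul_eq_div, le_div_iff₀ hL]
  nlinarith
end
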